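/- Let p₁ < p₀ and x₁ < x₀ be reals, and let α ∈ (0, π/2) satisfy α·cot(α) = D·(x₀ − x₁)/(p₀ − p₁) for some D > 0. Define g(x) = (p₀+p₁)/2 + ((p₀−p₁)/(2 sin α))·sin(α(x − (x₀+x₁)/2)/((x₀−x₁)/2)) on [x₁, x₀]. Then g(x₁) = p₁, g(x₀) = p₀, g'(x₁) = g'(x₀) = D, ∫_{x₁}^{x₀} g(x) dx = (p₀+p₁)(x₀−x₁)/2, and for all x ∈ [x₁, x₀], D ≤ g'(x) ≤ (π/2)·(p₀−p₁)/(x₀−x₁). -/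

import Mathlib

open Real

set_option maxHeartbeats 1000000 in
/-- Properties of the sinusoidal replacement of a linear segment. -/
theorem stmt_7 (p₁ p₀ x₁ x₀ α D : ℝ) (g : ℝ → ℝ)
    (hp : p₁ < p₀) (hx : x₁ < x₀) (hα1 : 0 < α) (hα2 : α < Real.pi / 2) (hD : 0 < D)
    (hαD : α * (Real.cos α / Real.sin α) = D * (x₀ - x₁) / (p₀ - p₁))
    (hg : ∀ x, g x = (p₀ + p₁) / 2 +
      (p₀ - p₁) / (2 * Real.sin α) * Real.sin (α * (x - (x₀ + x₁) / 2) / ((x₀ - x₁) / 2))) :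
    g x₁ = p₁ ∧ g x₀ = p₀ ∧ deriv g x₁ = D ∧ deriv g x₀ = D ∧
    (∫ x in x₁..x₀, g x) = (p₀ + p₁) * (x₀ - x₁) / 2 ∧
    ∀ x ∈ Set.Icc x₁ x₀,
      D ≤ deriv g x ∧ deriv g x ≤ (Real.pi / 2) * (p₀ - p₁) / (x₀ - x₁) := by
  have hsα : 0 < Real.sin α := Real.sin_pos_of_pos_of_lt_pi hα1 (by linarith [Real.pi_gt_three])
  have hcα : 0 < Real.cos α := Real.cos_pos_of_mem_Ioo ⟨by linarith [Real.pi_pos], hα2⟩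
  have hxx : (0:ℝ) < x₀ - x₁ := by linarith
  have hpp : (0:ℝ) < p₀ - p₁ := by linarith
  set c := (x₀ + x₁) / 2 with hc
  set h := (x₀ - x₁) / 2 with hh
  have hh0 : (0:ℝ) < h := by positivity
  set A := (p₀ - p₁) / (2 * Real.sin α) with hA
  have hA0 : 0 < A := by positivity
  have hgf : g = fun x => (p₀ + p₁) / 2 + A * Real.sin (α * (x - c) / h) := funext hg
  -- endpoint argument values
  have harg1 : α * (x₁ - c) / h = -α := by
    rw [hc, hh]; field_simp; ring
  have harg0 : α * (x₀ - c) / h = α := by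
    rw [hc, hh]; field_simp; ring
  have hg1 : g x₁ = p₁ := by
    rw [hgf]; simp only [harg1, Real.sin_neg, hA]; field_simp; ring
  have hg0 : g x₀ = p₀ := by
    rw [hgf]; simp only [harg0, hA]; field_simp; ring
  -- derivative
  have hderiv : ∀ x, HasDerivAt g (A * (Real.cos (α * (x - c) / h) * (α / h))) x := by
    intro x
    rw [hgf]
    have h1 : HasDerivAt (fun x : ℝ => α * (x - c) / h) (α / h) x := by
      have := (((hasDerivAt_id x).sub_const c).const_mul α).div_const h
      simpa using this
    exact ((h1.sin.const_mul A).const_add _)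
  have hderiv' : ∀ x, deriv g x = A * (Real.cos (α * (x - c) / h) * (α / h)) :=
    fun x => (hderiv x).deriv
  -- key algebraic identity: A * cos α * (α/h) = D
  have hkey : A * (Real.cos α * (α / h)) = D := by
    field_simp at hαD
    rw [hA, hh]
    field_simp
    linear_combination hαD
  have hd1 : deriv g x₁ = D := by rw [hderiv', harg1, Real.cos_neg, hkey]
  have hd0 : deriv g x₀ = D := by rw [hderiv', harg0, hkey]
  -- integral
  have hint : (∫ x in x₁..x₀, g x) = (p₀ + p₁) * (x₀ - x₁) / 2 := by
    have hα0 : α ≠ 0 := ne_of_gt hα1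
    have hF : ∀ x ∈ Set.uIcc x₁ x₀, HasDerivAt
        (fun x => (p₀ + p₁) / 2 * x - A * (h / α) * Real.cos (α * (x - c) / h)) (g x) x := by
      intro x _
      have h1 : HasDerivAt (fun x : ℝ => α * (x - c) / h) (α / h) x := by
        have := (((hasDerivAt_id x).sub_const c).const_mul α).div_const h
        simpa using this
      have h2 := ((hasDerivAt_id x).const_mul ((p₀ + p₁) / 2)).sub
        ((h1.cos.const_mul (A * (h / α))))
      refine h2.congr_deriv ?_
      rw [hg]
      have : A * (h / α) * (-Real.sin (α * (x - c) / h) * (α / h)) =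
          -(A * Real.sin (α * (x - c) / h)) := by
        field_simp
      rw [this]; ring
    have hcont : IntervalIntegrable g MeasureTheory.volume x₁ x₀ := by
      rw [hgf]
      apply Continuous.intervalIntegrable
      fun_prop
    rw [intervalIntegral.integral_eq_sub_of_hasDerivAt hF hcont]
    simp only [harg0, harg1, Real.cos_neg]
    ring
  refine ⟨hg1, hg0, hd1, hd0, hint, ?_⟩
  intro x hx'
  rw [hderiv']
  set θ := α * (x - c) / h with hθ
  have hθb : |θ| ≤ α := by
    rw [hθ, abs_div, abs_of_pos hh0, div_le_iff₀ hh0, abs_mul, abs_of_pos hα1]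
    have : |x - c| ≤ h := by
      rcases hx' with ⟨h1, h2⟩
      rw [hc, hh, abs_le]
      constructor <;> linarith
    nlinarith
  have hcosθ : Real.cos α ≤ Real.cos θ := by
    rw [← Real.cos_abs θ]
    apply Real.cos_le_cos_of_nonneg_of_le_pi (abs_nonneg _) (by linarith [Real.pi_gt_three]) hθb
  have hcosθ1 : Real.cos θ ≤ 1 := Real.cos_le_one θ
  constructor
  · calc D = A * (Real.cos α * (α / h)) := hkey.symm
      _ ≤ A * (Real.cos θ * (α / h)) := by
          apply mul_le_mul_of_nonneg_left _ hA0.le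
          apply mul_le_mul_of_nonneg_right hcosθ (by positivity)
  · calc A * (Real.cos θ * (α / h)) ≤ A * (1 * (α / h)) := by
          apply mul_le_mul_of_nonneg_left _ hA0.le
          apply mul_le_mul_of_nonneg_right hcosθ1 (by positivity)
      _ = (p₀ - p₁) / (x₀ - x₁) * (α / Real.sin α) := by
          rw [hA, hh]; field_simp
      _ ≤ (Real.pi / 2) * (p₀ - p₁) / (x₀ - x₁) := by
          have hsin : 2 / Real.pi * α ≤ Real.sin α :=
            Real.mul_le_sin hα1.le hα2.le
          have hπ : 0 < Real.pi := Real.pi_pos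
          rw [div_mul_div_comm, div_le_div_iff₀ (by positivity) (by positivity)]
          have h3 : Real.pi / 2 * (2 / Real.pi * α) ≤ Real.pi / 2 * Real.sin α :=
            mul_le_mul_of_nonneg_left hsin (by positivity)
          have h4 : Real.pi / 2 * (2 / Real.pi * α) = α := by field_simp
          have h5 : α ≤ Real.pi / 2 * Real.sin α := by linarith
          nlinarith [mul_le_mul_of_nonneg_left h5
            (by positivity : (0:ℝ) ≤ (p₀ - p₁) * (x₀ - x₁))]
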